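/- arXiv:1402.6466 — 2 statements merged into one kernel-verified Lean document; each statement's English description precedes it below -/
import Mathlib

section
/- There are absolute positive constants a, c and C such that for all sufficiently large n and every positive real p ≤ c satisfying np ≥ C·log₂ n, the probability that G = G(n,p) satisfies τ'(G) ≤ 2n is at most 2^{−a·p·n²}. -/
open MeasureTheory ProbabilityTheory Filter Real

namespace RandomBipartiteDecomposition

/-- The set of edges of the complete bipartite graph with vertex classes `A` and `B`. -/
def bicliqueEdges {V : Type*} (A B : Finset V) : Set (Sym2 V) :=
  {e | ∃ a ∈ A, ∃ b ∈ B, e = s(a, b)}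

/-- `A`, `B` are the vertex classes of a complete bipartite subgraph of `G`. -/
def IsBicliqueIn {V : Type*} (G : SimpleGraph V) (A B : Finset V) : Prop :=
  A.Nonempty ∧ B.Nonempty ∧ Disjoint A B ∧ ∀ a ∈ A, ∀ b ∈ B, G.Adj a b

/-- A complete bipartite subgraph is nontrivial if both classes have at least 2 vertices. -/
def IsNontrivialBicliqueIn {V : Type*} (G : SimpleGraph V) (A B : Finset V) : Prop :=
  2 ≤ A.card ∧ 2 ≤ B.card ∧ Disjoint A B ∧ ∀ a ∈ A, ∀ b ∈ B, G.Adj a b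

/-- `P` lists `m` pairwise edge-disjoint complete bipartite subgraphs of `G` such that
every edge of `G` belongs to exactly one of them. -/
def IsBicliqueDecomp {V : Type*} (G : SimpleGraph V) (m : ℕ)
    (P : Fin m → Finset V × Finset V) : Prop :=
  (∀ i, IsBicliqueIn G (P i).1 (P i).2) ∧
  (∀ i j, i ≠ j →
    Disjoint (bicliqueEdges (P i).1 (P i).2) (bicliqueEdges (P j).1 (P j).2)) ∧
  (⋃ i, bicliqueEdges (P i).1 (P i).2) = G.edgeSet

/-- As above but with all complete bipartite subgraphs nontrivial. -/
def IsNontrivialBicliqueDecomp {V : Type*} (G : SimpleGraph V) (m : ℕ)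
    (P : Fin m → Finset V × Finset V) : Prop :=
  (∀ i, IsNontrivialBicliqueIn G (P i).1 (P i).2) ∧
  (∀ i j, i ≠ j →
    Disjoint (bicliqueEdges (P i).1 (P i).2) (bicliqueEdges (P j).1 (P j).2)) ∧
  (⋃ i, bicliqueEdges (P i).1 (P i).2) = G.edgeSet

/-- `τ(G)`: the minimum number of pairwise edge-disjoint complete bipartite subgraphs
of `G` so that each edge of `G` belongs to exactly one of them. -/
noncomputable def tau {V : Type*} (G : SimpleGraph V) : ℕ :=
  sInf {m | ∃ P : Fin m → Finset V × Finset V, IsBicliqueDecomp G m P}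

/-- `τ'(G)`: the minimum number of pairwise edge-disjoint *nontrivial* complete bipartite
subgraphs of `G` covering all edges of `G`; `⊤` if there is no such cover. -/
noncomputable def tau' {V : Type*} (G : SimpleGraph V) : ℕ∞ :=
  sInf {t : ℕ∞ | ∃ m : ℕ, t = m ∧ ∃ P : Fin m → Finset V × Finset V,
    IsNontrivialBicliqueDecomp G m P}

/-- `S` is an independent set of `G`. -/
def IsIndepFinset {V : Type*} (G : SimpleGraph V) (S : Finset V) : Prop :=
  ∀ a ∈ S, ∀ b ∈ S, ¬ G.Adj a b

/-- `α(G)`: the maximum size of an independent set of `G`. -/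
noncomputable def alpha {V : Type*} (G : SimpleGraph V) : ℕ :=
  sSup {k | ∃ S : Finset V, S.card = k ∧ IsIndepFinset G S}

/-- `S` induces in `G` a complete bipartite graph with nonempty vertex classes `A`, `B`. -/
def IsInducedCompleteBipartite {V : Type*} (G : SimpleGraph V) (S A B : Finset V) : Prop :=
  A.Nonempty ∧ B.Nonempty ∧ Disjoint A B ∧ (A : Set V) ∪ (B : Set V) = (S : Set V) ∧
  ∀ u ∈ S, ∀ v ∈ S, (G.Adj u v ↔ ((u ∈ A ∧ v ∈ B) ∨ (u ∈ B ∧ v ∈ A)))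

/-- `β(G)`: the largest number of vertices of an induced complete bipartite subgraph. -/
noncomputable def beta {V : Type*} (G : SimpleGraph V) : ℕ :=
  sSup {k | ∃ S A B : Finset V, IsInducedCompleteBipartite G S A B ∧ S.card = k}

/-- The Bernoulli measure on `Bool` giving `true` probability `p`. -/
noncomputable def bernoulliBool (p : ℝ) : Measure Bool :=
  p.toNNReal • Measure.dirac true + (1 - p).toNNReal • Measure.dirac false

instance (p : ℝ) : IsFiniteMeasure (bernoulliBool p) := by
  unfold bernoulliBool; infer_instance

/-- The Erdős–Rényi random graph `G(n,p)`: each unordered pair of vertices flips an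
independent `p`-coin. Events about the graph are subsets of the coin-flip space. -/
noncomputable def erdosRenyi (n : ℕ) (p : ℝ) : Measure (Sym2 (Fin n) → Bool) :=
  Measure.pi fun _ => bernoulliBool p

/-- The simple graph determined by the coin flips `ω`. -/
def graphOf (n : ℕ) (ω : Sym2 (Fin n) → Bool) : SimpleGraph (Fin n) :=
  SimpleGraph.fromEdgeSet {e | ω e = true}

/-- `f(k) = C(n,k) · 2^{-C(k,2)}`, the expected number of independent sets of size `k`
in `G(n,1/2)`. -/
noncomputable def f (n k : ℕ) : ℝ :=
  (n.choose k : ℝ) * (2 : ℝ) ^ (-(k.choose 2 : ℤ))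

/-- `k₀(n)`: the largest `k` with `f(k) ≥ 1`. -/
noncomputable def k0 (n : ℕ) : ℕ := sSup {k | 1 ≤ f n k}

/-- `g(k) = C(n,k+2) · (2^{k+1} - 1) · 2^{-C(k+2,2)}`, the expected number of induced
complete bipartite subgraphs on `k+2` vertices in `G(n,1/2)`. -/
noncomputable def g (n k : ℕ) : ℝ :=
  (n.choose (k + 2) : ℝ) * ((2 : ℝ) ^ (k + 1) - 1) * (2 : ℝ) ^ (-((k + 2).choose 2 : ℤ))

/-- The number of independent sets of size `k` in the graph determined by `ω`. -/
noncomputable def numIndep (n k : ℕ) (ω : Sym2 (Fin n) → Bool) : ℕ :=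
  Set.ncard {S : Finset (Fin n) | S.card = k ∧ IsIndepFinset (graphOf n ω) S}

/-- The number of `m`-element vertex subsets inducing a complete bipartite graph in the
graph determined by `ω`. -/
noncomputable def numBip (n m : ℕ) (ω : Sym2 (Fin n) → Bool) : ℕ :=
  Set.ncard {S : Finset (Fin n) | S.card = m ∧
    ∃ A B : Finset (Fin n), IsInducedCompleteBipartite (graphOf n ω) S A B}

section Aux

variable {n : ℕ}

/-- edges of the biclique as a Finset -/
def pairSet (A B : Finset (Fin n)) : Finset (Sym2 (Fin n)) :=
  (A ×ˢ B).image fun x => s(x.1, x.2)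

lemma mem_pairSet {A B : Finset (Fin n)} {e : Sym2 (Fin n)} :
    e ∈ pairSet A B ↔ ∃ a ∈ A, ∃ b ∈ B, e = s(a, b) := by
  simp only [pairSet, Finset.mem_image, Finset.mem_product, Prod.exists]
  constructor
  · rintro ⟨a, b, ⟨ha, hb⟩, rfl⟩; exact ⟨a, ha, b, hb, rfl⟩
  · rintro ⟨a, ha, b, hb, rfl⟩; exact ⟨a, b, ⟨ha, hb⟩, rfl⟩

lemma coe_pairSet (A B : Finset (Fin n)) :
    (pairSet A B : Set (Sym2 (Fin n))) = bicliqueEdges A B := by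
  ext e
  simp only [Finset.mem_coe, mem_pairSet, bicliqueEdges, Set.mem_setOf_eq]

lemma not_isDiag_of_mem_pairSet {A B : Finset (Fin n)} (hd : Disjoint A B)
    {e : Sym2 (Fin n)} (he : e ∈ pairSet A B) : ¬ e.IsDiag := by
  obtain ⟨a, ha, b, hb, rfl⟩ := mem_pairSet.mp he
  rw [Sym2.mk_isDiag_iff]
  rintro rfl
  exact (Finset.disjoint_left.mp hd ha) hb

lemma card_pairSet {A B : Finset (Fin n)} (hd : Disjoint A B) :
    (pairSet A B).card = A.card * B.card := by
  rw [pairSet, Finset.card_image_of_injOn, Finset.card_product]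
  rintro ⟨a, b⟩ hab ⟨a', b'⟩ hab' h
  simp only [Finset.coe_product, Set.mem_prod, Finset.mem_coe] at hab hab'
  rw [Sym2.eq_iff] at h
  rcases h with ⟨rfl, rfl⟩ | ⟨rfl, rfl⟩
  · rfl
  · exact absurd hab'.2 (fun h1 => (Finset.disjoint_left.mp hd hab.1) h1)

lemma bb_true (p : ℝ) : bernoulliBool p {true} = ENNReal.ofReal p := by
  simp [bernoulliBool, Measure.dirac_apply' _ (by trivial : MeasurableSet ({true} : Set Bool)),
    Set.indicator, ENNReal.smul_def, ENNReal.ofReal, -Measure.coe_nnreal_smul]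

lemma bb_false (p : ℝ) : bernoulliBool p {false} = ENNReal.ofReal (1 - p) := by
  simp [bernoulliBool, Measure.dirac_apply' _ (by trivial : MeasurableSet ({false} : Set Bool)),
    Set.indicator, ENNReal.smul_def, ENNReal.ofReal, -Measure.coe_nnreal_smul]

lemma bb_univ (p : ℝ) (hp0 : 0 ≤ p) (hp1 : p ≤ 1) : bernoulliBool p Set.univ = 1 := by
  simp only [bernoulliBool, Measure.coe_add, Measure.coe_smul, Pi.add_apply, Pi.smul_apply,
    measure_univ, smul_eq_mul, mul_one, ENNReal.smul_def]
  rw [show ((p.toNNReal : NNReal) : ENNReal) = ENNReal.ofReal p from rfl,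
    show (((1 - p).toNNReal : NNReal) : ENNReal) = ENNReal.ofReal (1 - p) from rfl,
    ← ENNReal.ofReal_add hp0 (by linarith)]
  norm_num

lemma card_filter_not_isDiag :
    (Finset.univ.filter (fun e : Sym2 (Fin n) => ¬ e.IsDiag)).card = n.choose 2 := by
  have := Sym2.card_subtype_not_diag (α := Fin n)
  rwa [Fintype.card_subtype, Fintype.card_fin] at this

lemma measure_forced (p : ℝ) (hp0 : 0 ≤ p) (hp1 : p ≤ 1) (U : Finset (Sym2 (Fin n)))
    (hU : ∀ e ∈ U, ¬ e.IsDiag) :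
    erdosRenyi n p {ω | ∀ e, ¬ e.IsDiag → (ω e = true ↔ e ∈ U)}
      = ENNReal.ofReal (p ^ U.card * (1 - p) ^ (n.choose 2 - U.card)) := by
  classical
  set s : Sym2 (Fin n) → Set Bool := fun e =>
    if e.IsDiag then Set.univ else (if e ∈ U then {true} else {false}) with hs
  have hev : {ω : Sym2 (Fin n) → Bool | ∀ e, ¬ e.IsDiag → (ω e = true ↔ e ∈ U)}
      = Set.pi Set.univ s := by
    ext ω
    simp only [Set.mem_setOf_eq, Set.mem_pi, Set.mem_univ, forall_true_left, hs]
    constructor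
    · intro h e
      by_cases hd : e.IsDiag
      · simp [hd]
      · by_cases he : e ∈ U
        · simp [hd, he, (h e hd).mpr he]
        · simp only [hd, he, if_false, Set.mem_singleton_iff]
          cases hω : ω e
          · rfl
          · exact absurd ((h e hd).mp hω) he
    · intro h e hd
      have h2 := h e
      by_cases he : e ∈ U <;> simp only [hd, he, if_false, if_true,
        Set.mem_singleton_iff] at h2 <;> simp [h2, he]
  rw [hev]
  unfold erdosRenyi
  rw [Measure.pi_pi]
  have hfac : ∀ e : Sym2 (Fin n), bernoulliBool p (s e)
      = if e.IsDiag then 1 else (if e ∈ U then ENNReal.ofReal p else ENNReal.ofReal (1 - p)) := by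
    intro e
    by_cases hd : e.IsDiag
    · rw [hs]; simp only [hd, if_true]; exact bb_univ p hp0 hp1
    · by_cases he : e ∈ U <;> simp [hs, hd, he, bb_true, bb_false]
  simp_rw [hfac]
  rw [← Finset.prod_filter_mul_prod_filter_not Finset.univ (fun e : Sym2 (Fin n) => e.IsDiag)]
  have h1 : ∀ e ∈ Finset.univ.filter (fun e : Sym2 (Fin n) => e.IsDiag),
      (if e.IsDiag then 1 else (if e ∈ U then ENNReal.ofReal p else ENNReal.ofReal (1 - p)))
        = 1 := by
    intro e he; rw [Finset.mem_filter] at he; simp [he.2]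
  rw [Finset.prod_congr rfl h1, Finset.prod_const_one, one_mul]
  have hUsub : U ⊆ Finset.univ.filter (fun e : Sym2 (Fin n) => ¬ e.IsDiag) := by
    intro e he; exact Finset.mem_filter.mpr ⟨Finset.mem_univ _, hU e he⟩
  rw [← Finset.prod_sdiff hUsub]
  have h2 : ∀ e ∈ (Finset.univ.filter (fun e : Sym2 (Fin n) => ¬ e.IsDiag)) \ U,
      (if e.IsDiag then 1 else (if e ∈ U then ENNReal.ofReal p else ENNReal.ofReal (1 - p)))
        = ENNReal.ofReal (1 - p) := by
    intro e he
    rw [Finset.mem_sdiff, Finset.mem_filter] at he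
    simp [he.1.2, he.2]
  have h3 : ∀ e ∈ U,
      (if e.IsDiag then 1 else (if e ∈ U then ENNReal.ofReal p else ENNReal.ofReal (1 - p)))
        = ENNReal.ofReal p := by
    intro e he; simp [hU e he, he]
  rw [Finset.prod_congr rfl h2, Finset.prod_congr rfl h3, Finset.prod_const, Finset.prod_const,
    Finset.card_sdiff_of_subset hUsub, card_filter_not_isDiag]
  rw [← ENNReal.ofReal_pow (by linarith), ← ENNReal.ofReal_pow hp0, ← ENNReal.ofReal_mul
    (pow_nonneg (by linarith) _), mul_comm]

/-- The edge set of a system of bicliques. -/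
def sysU {m : ℕ} (P : Fin m → Finset (Fin n) × Finset (Fin n)) : Finset (Sym2 (Fin n)) :=
  Finset.univ.biUnion fun i => pairSet (P i).1 (P i).2

/-- A good (admissible) system: nontrivial classes, disjoint classes, edge-disjoint. -/
def Good {m : ℕ} (P : Fin m → Finset (Fin n) × Finset (Fin n)) : Prop :=
  (∀ i, 2 ≤ (P i).1.card ∧ 2 ≤ (P i).2.card ∧ Disjoint (P i).1 (P i).2) ∧
  (∀ i j, i ≠ j → Disjoint (pairSet (P i).1 (P i).2) (pairSet (P j).1 (P j).2))

lemma sysU_nondiag {m : ℕ} {P : Fin m → Finset (Fin n) × Finset (Fin n)} (h : Good P) :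
    ∀ e ∈ sysU P, ¬ e.IsDiag := by
  intro e he
  obtain ⟨i, _, hi⟩ := Finset.mem_biUnion.mp he
  exact not_isDiag_of_mem_pairSet (h.1 i).2.2 hi

lemma card_sysU {m : ℕ} {P : Fin m → Finset (Fin n) × Finset (Fin n)} (h : Good P) :
    (sysU P).card = ∑ i, (P i).1.card * (P i).2.card := by
  rw [sysU, Finset.card_biUnion (fun i _ j _ hij => h.2 i j hij)]
  exact Finset.sum_congr rfl fun i _ => card_pairSet (h.1 i).2.2

/-- The weight of a pair of vertex classes. -/
noncomputable def vwt (q : ℝ) (AB : Finset (Fin n) × Finset (Fin n)) : ℝ :=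
  if 2 ≤ AB.1.card ∧ 2 ≤ AB.2.card then q ^ (AB.1.card * AB.2.card) else 0

lemma vwt_nonneg {q : ℝ} (hq : 0 ≤ q) (AB : Finset (Fin n) × Finset (Fin n)) :
    0 ≤ vwt q AB := by
  unfold vwt; split
  · positivity
  · exact le_refl 0

lemma sum_pow_card (x : ℝ) : ∑ A : Finset (Fin n), x ^ A.card = (x + 1) ^ n := by
  classical
  have h := Finset.prod_add (fun _ : Fin n => x) (fun _ => 1) Finset.univ
  simp only [Finset.prod_const, Finset.prod_const_one, mul_one, one_pow, Finset.card_univ,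
    Fintype.card_fin, Finset.powerset_univ] at h
  exact h.symm

lemma sum_vwt_le (q : ℝ) (hq0 : 0 < q) (hq1 : q ≤ 1) :
    ∑ AB : Finset (Fin n) × Finset (Fin n), vwt q AB
      ≤ (q ^ 2 + 1) ^ (2 * n) / q ^ 4 := by
  have hle : ∀ AB : Finset (Fin n) × Finset (Fin n),
      vwt q AB ≤ (q ^ 2) ^ AB.1.card * (q ^ 2) ^ AB.2.card / q ^ 4 := by
    rintro ⟨A, B⟩
    unfold vwt
    split
    · rename_i h
      rw [div_eq_inv_mul, ← pow_mul, ← pow_mul, ← pow_add, le_inv_mul_iff₀ (by positivity),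
        ← pow_add]
      exact pow_le_pow_of_le_one hq0.le hq1 (by nlinarith [h.1, h.2])
    · positivity
  calc ∑ AB : Finset (Fin n) × Finset (Fin n), vwt q AB
      ≤ ∑ AB : Finset (Fin n) × Finset (Fin n),
          (q ^ 2) ^ AB.1.card * (q ^ 2) ^ AB.2.card / q ^ 4 :=
        Finset.sum_le_sum fun AB _ => hle AB
    _ = (∑ A : Finset (Fin n), (q ^ 2) ^ A.card) *
          (∑ B : Finset (Fin n), (q ^ 2) ^ B.card) / q ^ 4 := by
        rw [Fintype.sum_prod_type, Finset.sum_mul, Finset.sum_div]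
        exact Finset.sum_congr rfl fun A _ => by rw [Finset.mul_sum, Finset.sum_div]
    _ = (q ^ 2 + 1) ^ (2 * n) / q ^ 4 := by
        rw [sum_pow_card, two_mul, pow_add]

/-- sum over all systems of the product weight equals the power of the total weight -/
lemma sum_prod_vwt (q : ℝ) (m : ℕ) :
    ∑ P : Fin m → Finset (Fin n) × Finset (Fin n), ∏ i, vwt q (P i)
      = (∑ AB : Finset (Fin n) × Finset (Fin n), vwt q AB) ^ m := by
  classical
  have h := Finset.prod_univ_sum (fun _ : Fin m => (Finset.univ : Finset (Finset (Fin n) × Finset (Fin n))))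
    (fun _ AB => vwt q AB)
  rw [Fintype.piFinset_univ] at h
  rw [← h, Finset.prod_const, Finset.card_univ, Fintype.card_fin]

set_option maxHeartbeats 1000000 in
lemma final_bound (n : ℕ) (p : ℝ) (hn : 100 ≤ n) (hp0 : 0 < p) (hpc : p ≤ 1 / 1024)
    (hC : 1024 * Real.logb 2 n ≤ n * p) :
    (2 * (n : ℝ) + 1) * ((1 - p) ^ n.choose 2 *
      (((p / (1 - p)) ^ 2 + 1) ^ (2 * n) / (p / (1 - p)) ^ 4) ^ (2 * n))
      ≤ (2 : ℝ) ^ (-(1 / 4 * p * (n : ℝ) ^ 2)) := by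
  have hn' : (100 : ℝ) ≤ n := by exact_mod_cast hn
  have hn0 : (0 : ℝ) < n := by linarith
  set nn := (n : ℝ) with hnn
  set L := Real.log nn with hL
  have hL0 : 0 < L := Real.log_pos (by linarith)
  have hL1 : 1 ≤ L := by
    have h1 : Real.exp 1 ≤ 100 := by
      have := Real.exp_one_lt_d9; linarith
    have h2 := Real.log_le_log (Real.exp_pos 1) (le_trans h1 hn')
    rwa [Real.log_exp] at h2
  have hlog2pos : (0 : ℝ) < Real.log 2 := Real.log_pos (by norm_num)
  have hlog2lt : Real.log 2 < 0.6931471808 := Real.log_two_lt_d9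
  have hnp : 1024 * L ≤ nn * p := by
    have h1 : Real.logb 2 nn = L / Real.log 2 := by rw [Real.logb, hL]
    have h2 : L ≤ L / Real.log 2 := by
      rw [le_div_iff₀ hlog2pos]; nlinarith
    have h3 : 1024 * (L / Real.log 2) ≤ nn * p := by rw [← h1]; exact hC
    linarith
  have hnp1 : 1 ≤ nn * p := by linarith
  have h1p : 1 / 2 ≤ 1 - p := by linarith
  set q := p / (1 - p) with hq
  have hq0 : 0 < q := div_pos hp0 (by linarith)
  have hq2p : q ≤ 2 * p := by
    rw [hq, div_le_iff₀ (by linarith)]; nlinarith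
  have hq1 : q ≤ 1 := le_trans hq2p (by linarith)
  have hqinv : q⁻¹ ≤ nn := by
    rw [inv_le_iff_one_le_mul₀ hq0]
    have hpq : p ≤ q := by
      rw [hq, le_div_iff₀ (by linarith)]; nlinarith
    nlinarith
  have hNc : (n.choose 2 : ℝ) = nn * (nn - 1) / 2 := by
    rw [Nat.cast_choose_two]
  have e_nn : Real.exp L = nn := Real.exp_log hn0
  have t1 : 2 * nn + 1 ≤ Real.exp (3 * L) := by
    have h1 : Real.exp (3 * L) = nn ^ 3 := by
      rw [show (3 : ℝ) * L = ((3 : ℕ) : ℝ) * L by norm_num, Real.exp_nat_mul, e_nn]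
    rw [h1]; nlinarith
  have t2 : (1 - p) ^ n.choose 2 ≤ Real.exp (-(3 / 8 * p * nn ^ 2)) := by
    have h1 : (1 - p) ≤ Real.exp (-p) := by
      have := Real.add_one_le_exp (-p); linarith
    have h2 : (1 - p) ^ n.choose 2 ≤ Real.exp (-p) ^ n.choose 2 :=
      pow_le_pow_left₀ (by linarith) h1 _
    rw [← Real.exp_nat_mul] at h2
    refine h2.trans (Real.exp_le_exp.mpr ?_)
    rw [hNc]; nlinarith
  have t3 : ((q ^ 2 + 1) ^ (2 * n) / q ^ 4) ^ (2 * n)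
      ≤ Real.exp (16 * p ^ 2 * nn ^ 2 + 8 * nn * L) := by
    rw [div_pow, ← pow_mul]
    have hA : (q ^ 2 + 1) ^ (2 * n * (2 * n)) ≤ Real.exp (16 * p ^ 2 * nn ^ 2) := by
      have h1 : (q ^ 2 + 1) ^ (2 * n * (2 * n)) ≤ Real.exp (q ^ 2) ^ (2 * n * (2 * n)) :=
        pow_le_pow_left₀ (by positivity)
          (by have := Real.add_one_le_exp (q ^ 2); linarith) _
      rw [← Real.exp_nat_mul] at h1
      refine h1.trans (Real.exp_le_exp.mpr ?_)
      have hcast : ((2 * n * (2 * n) : ℕ) : ℝ) = 4 * nn ^ 2 := by push_cast; ring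
      rw [hcast]
      have hq2 : q ^ 2 ≤ 4 * p ^ 2 := by nlinarith
      nlinarith [mul_le_mul_of_nonneg_right hq2 (sq_nonneg nn)]
    have hB : ((q ^ 4) ^ (2 * n))⁻¹ ≤ Real.exp (8 * nn * L) := by
      have h1 : ((q ^ 4) ^ (2 * n))⁻¹ = (q⁻¹) ^ (4 * (2 * n)) := by
        rw [← pow_mul, ← inv_pow]
      rw [h1]
      have h2 : (q⁻¹) ^ (4 * (2 * n)) ≤ nn ^ (4 * (2 * n)) :=
        pow_le_pow_left₀ (by positivity) hqinv _
      refine h2.trans ?_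
      have h3 : nn ^ (4 * (2 * n)) = Real.exp (((4 * (2 * n) : ℕ) : ℝ) * L) := by
        rw [Real.exp_nat_mul, e_nn]
      rw [h3]
      refine Real.exp_le_exp.mpr (le_of_eq ?_)
      push_cast; ring
    calc (q ^ 2 + 1) ^ (2 * n * (2 * n)) / (q ^ 4) ^ (2 * n)
        = (q ^ 2 + 1) ^ (2 * n * (2 * n)) * ((q ^ 4) ^ (2 * n))⁻¹ := div_eq_mul_inv _ _
      _ ≤ Real.exp (16 * p ^ 2 * nn ^ 2) * Real.exp (8 * nn * L) :=
          mul_le_mul hA hB (by positivity) (Real.exp_nonneg _)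
      _ = Real.exp (16 * p ^ 2 * nn ^ 2 + 8 * nn * L) := (Real.exp_add _ _).symm
  have hZ0 : (0 : ℝ) ≤ ((q ^ 2 + 1) ^ (2 * n) / q ^ 4) ^ (2 * n) := by positivity
  have total : (2 * nn + 1) * ((1 - p) ^ n.choose 2 *
      ((q ^ 2 + 1) ^ (2 * n) / q ^ 4) ^ (2 * n))
      ≤ Real.exp (3 * L) * (Real.exp (-(3 / 8 * p * nn ^ 2)) *
          Real.exp (16 * p ^ 2 * nn ^ 2 + 8 * nn * L)) := by
    refine mul_le_mul t1 (mul_le_mul t2 t3 hZ0 (Real.exp_nonneg _)) ?_ (Real.exp_nonneg _)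
    exact mul_nonneg (pow_nonneg (by linarith) _) hZ0
  rw [← Real.exp_add, ← Real.exp_add] at total
  refine le_trans total ?_
  rw [Real.rpow_def_of_pos (by norm_num : (0 : ℝ) < 2)]
  refine Real.exp_le_exp.mpr ?_
  have hX0 : 0 < p * nn ^ 2 := by positivity
  have hA1 : nn * L ≤ p * nn ^ 2 / 1024 := by nlinarith
  have hA2 : L ≤ nn * L := by nlinarith
  have hA3 : p ^ 2 * nn ^ 2 ≤ p * nn ^ 2 / 1024 := by nlinarith
  have hlog : Real.log 2 * (1 / 4 * p * nn ^ 2) ≤ 0.6931471808 * (1 / 4 * p * nn ^ 2) := by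
    nlinarith
  nlinarith

end Aux

/-- Corollary 3.3: for suitable absolute constants `a, c, C`, for large `n`
and `p ≤ c` with `np ≥ C log₂ n`, `P(τ'(G(n,p)) ≤ 2n) ≤ 2^{-a·p·n²}`. -/
theorem tau'_le_two_n_unlikely :
    ∃ a c C : ℝ, 0 < a ∧ 0 < c ∧ 0 < C ∧ ∃ N : ℕ, ∀ n : ℕ, N ≤ n →
      ∀ p : ℝ, 0 < p → p ≤ c → C * Real.logb 2 n ≤ n * p →
      erdosRenyi n p {ω | tau' (graphOf n ω) ≤ ((2 * n : ℕ) : ℕ∞)} ≤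
        ENNReal.ofReal ((2 : ℝ) ^ (-(a * p * n ^ 2))) := by
  classical
  refine ⟨1/4, 1/1024, 1024, by norm_num, by norm_num, by norm_num, 100, ?_⟩
  intro n hn p hp0 hpc hC
  have hp1 : p ≤ 1 := hpc.trans (by norm_num)
  have h1p : (0 : ℝ) < 1 - p := by linarith [hpc]
  set q : ℝ := p / (1 - p) with hq
  have hq0 : 0 < q := div_pos hp0 h1p
  have hq1 : q ≤ 1 := by
    rw [hq, div_le_one h1p]; linarith
  set β := (Finset (Fin n) × Finset (Fin n)) with hβ
  let Evt : (Σ m : Fin (2 * n + 1), (Fin (m : ℕ) → β)) → Set (Sym2 (Fin n) → Bool) :=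
    fun i => if Good i.2 then
      {ω | ∀ e, ¬ e.IsDiag → (ω e = true ↔ e ∈ sysU i.2)} else ∅
  -- Step 1: event inclusion
  have hincl : {ω : Sym2 (Fin n) → Bool | tau' (graphOf n ω) ≤ ((2 * n : ℕ) : ℕ∞)}
      ⊆ ⋃ i, Evt i := by
    intro ω hω
    simp only [Set.mem_setOf_eq] at hω
    have h2 : tau' (graphOf n ω) < ((2 * n + 1 : ℕ) : ℕ∞) :=
      lt_of_le_of_lt hω (by exact_mod_cast Nat.lt_succ_self (2 * n))
    rw [tau', sInf_lt_iff] at h2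
    obtain ⟨t, ht, htlt⟩ := h2
    obtain ⟨m, rfl, P, hdec⟩ := ht
    have hm : m < 2 * n + 1 := by exact_mod_cast htlt
    have hGood : Good P := by
      constructor
      · intro i
        obtain ⟨ha, hb, hc, _⟩ := hdec.1 i
        exact ⟨ha, hb, hc⟩
      · intro i j hij
        have hd := hdec.2.1 i j hij
        rw [← coe_pairSet, ← coe_pairSet] at hd
        exact Finset.disjoint_coe.mp hd
    refine Set.mem_iUnion.mpr ⟨⟨⟨m, hm⟩, P⟩, ?_⟩
    show ω ∈ if Good P then
      {ω : Sym2 (Fin n) → Bool | ∀ e, ¬ e.IsDiag → (ω e = true ↔ e ∈ sysU P)} else ∅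
    rw [if_pos hGood]
    intro e he
    have hedge : e ∈ (graphOf n ω).edgeSet ↔ (ω e = true) := by
      rw [graphOf, SimpleGraph.edgeSet_fromEdgeSet]
      simp only [Set.mem_diff, Set.mem_setOf_eq]
      exact ⟨fun h => h.1, fun h => ⟨h, he⟩⟩
    have hcover : e ∈ (graphOf n ω).edgeSet ↔ e ∈ sysU P := by
      rw [← hdec.2.2]
      simp only [Set.mem_iUnion, sysU, Finset.mem_biUnion, Finset.mem_univ, true_and]
      constructor
      · rintro ⟨i, hi⟩
        exact ⟨i, by rw [← coe_pairSet] at hi; exact hi⟩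
      · rintro ⟨i, hi⟩
        exact ⟨i, by rw [← coe_pairSet]; exact hi⟩
    rw [← hedge, hcover]
  -- Step 2: union bound
  have hmeas : erdosRenyi n p {ω | tau' (graphOf n ω) ≤ ((2 * n : ℕ) : ℕ∞)}
      ≤ ∑ i, erdosRenyi n p (Evt i) := by
    refine le_trans (measure_mono hincl) ?_
    refine le_trans (measure_iUnion_le _) ?_
    rw [tsum_fintype]
  -- Step 3: bound each term
  have hterm : ∀ i : (Σ m : Fin (2 * n + 1), (Fin (m : ℕ) → β)),
      erdosRenyi n p (Evt i)
        ≤ ENNReal.ofReal ((1 - p) ^ n.choose 2 * ∏ j, vwt q (i.2 j)) := by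
    rintro ⟨m, P⟩
    by_cases hG : Good P
    · show erdosRenyi n p (if Good P then _ else ∅) ≤ _
      rw [if_pos hG, measure_forced p hp0.le hp1 (sysU P) (sysU_nondiag hG)]
      apply ENNReal.ofReal_le_ofReal
      have hcard : (sysU P).card = ∑ j, (P j).1.card * (P j).2.card := card_sysU hG
      have hle : (sysU P).card ≤ n.choose 2 := by
        rw [← card_filter_not_isDiag (n := n)]
        refine Finset.card_le_card fun e he => ?_
        exact Finset.mem_filter.mpr ⟨Finset.mem_univ _, sysU_nondiag hG e he⟩
      have hprod : ∏ j, vwt q (P j) = q ^ (sysU P).card := by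
        rw [hcard, ← Finset.prod_pow_eq_pow_sum]
        exact Finset.prod_congr rfl fun j _ => by
          rw [vwt, if_pos ⟨(hG.1 j).1, (hG.1 j).2.1⟩]
      rw [hprod]
      have heq : (1 - p) ^ n.choose 2 * q ^ (sysU P).card
          = p ^ (sysU P).card * (1 - p) ^ (n.choose 2 - (sysU P).card) := by
        rw [hq, div_pow, pow_sub₀ (1 - p) (ne_of_gt h1p) hle]
        field_simp
      exact le_of_eq heq.symm
    · show erdosRenyi n p (if Good P then _ else ∅) ≤ _
      rw [if_neg hG, measure_empty]
      exact zero_le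
  -- Step 4: sum the real weights
  have hsum : ∑ i : (Σ m : Fin (2 * n + 1), (Fin (m : ℕ) → β)),
        ENNReal.ofReal ((1 - p) ^ n.choose 2 * ∏ j, vwt q (i.2 j))
      = ENNReal.ofReal (∑ i : (Σ m : Fin (2 * n + 1), (Fin (m : ℕ) → β)),
          (1 - p) ^ n.choose 2 * ∏ j, vwt q (i.2 j)) := by
    rw [ENNReal.ofReal_sum_of_nonneg]
    intro i _
    exact mul_nonneg (pow_nonneg (by linarith) _)
      (Finset.prod_nonneg fun j _ => vwt_nonneg hq0.le _)
  have hreal : ∑ i : (Σ m : Fin (2 * n + 1), (Fin (m : ℕ) → β)),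
        (1 - p) ^ n.choose 2 * ∏ j, vwt q (i.2 j)
      ≤ (2 * (n : ℝ) + 1) * ((1 - p) ^ n.choose 2 *
          ((q ^ 2 + 1) ^ (2 * n) / q ^ 4) ^ (2 * n)) := by
    rw [← Finset.univ_sigma_univ, Finset.sum_sigma]
    have hFm : ∀ m : Fin (2 * n + 1),
        ∑ P : Fin (m : ℕ) → β, ((1 - p) ^ n.choose 2 * ∏ j, vwt q (P j))
          ≤ (1 - p) ^ n.choose 2 * ((q ^ 2 + 1) ^ (2 * n) / q ^ 4) ^ (2 * n) := by
      intro m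
      rw [← Finset.mul_sum, sum_prod_vwt]
      refine mul_le_mul_of_nonneg_left ?_ (pow_nonneg (by linarith) _)
      have hF0 : 0 ≤ ∑ AB : β, vwt q AB :=
        Finset.sum_nonneg fun _ _ => vwt_nonneg hq0.le _
      have hFB : ∑ AB : β, vwt q AB ≤ (q ^ 2 + 1) ^ (2 * n) / q ^ 4 := sum_vwt_le q hq0 hq1
      have hB1 : 1 ≤ (q ^ 2 + 1) ^ (2 * n) / q ^ 4 := by
        rw [le_div_iff₀ (by positivity)]
        have h1 : q ^ 4 ≤ 1 := by
          calc q ^ 4 ≤ 1 ^ 4 := pow_le_pow_left₀ hq0.le hq1 4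
            _ = 1 := one_pow 4
        have h2 : (1 : ℝ) ≤ (q ^ 2 + 1) ^ (2 * n) := one_le_pow₀ (by nlinarith)
        linarith
      calc (∑ AB : β, vwt q AB) ^ (m : ℕ)
          ≤ ((q ^ 2 + 1) ^ (2 * n) / q ^ 4) ^ (m : ℕ) := pow_le_pow_left₀ hF0 hFB _
        _ ≤ ((q ^ 2 + 1) ^ (2 * n) / q ^ 4) ^ (2 * n) :=
            pow_le_pow_right₀ hB1 (Nat.lt_succ_iff.mp m.isLt)
    calc ∑ m : Fin (2 * n + 1), ∑ P : Fin (m : ℕ) → β,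
          ((1 - p) ^ n.choose 2 * ∏ j, vwt q (P j))
        ≤ ∑ _m : Fin (2 * n + 1),
            ((1 - p) ^ n.choose 2 * ((q ^ 2 + 1) ^ (2 * n) / q ^ 4) ^ (2 * n)) :=
          Finset.sum_le_sum fun m _ => hFm m
      _ = (2 * (n : ℝ) + 1) * ((1 - p) ^ n.choose 2 *
            ((q ^ 2 + 1) ^ (2 * n) / q ^ 4) ^ (2 * n)) := by
          rw [Finset.sum_const, Finset.card_univ, Fintype.card_fin, nsmul_eq_mul]
          push_cast; ring
  -- Step 5: conclude
  refine le_trans hmeas (le_trans (Finset.sum_le_sum fun i _ => hterm i) ?_)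
  rw [hsum]
  refine ENNReal.ofReal_le_ofReal (le_trans hreal ?_)
  exact final_bound n p hn hp0 hpc hC

end RandomBipartiteDecomposition
end

section
/- For every finite simple graph G = (V,E) there exists a subset U ⊆ V such that τ(G) = |V| − |U| + τ'(G[U]), where G[U] denotes the subgraph of G induced on U. -/
open MeasureTheory ProbabilityTheory Filter Real

namespace RandomBipartiteDecomposition

set_option linter.unusedSectionVars false
section Lemmas

open Finset

variable {V : Type*} [DecidableEq V]

lemma mem_bicliqueEdges {A B : Finset V} {e : Sym2 V} :
    e ∈ bicliqueEdges A B ↔ ∃ a ∈ A, ∃ b ∈ B, e = s(a, b) := Iff.rfl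

lemma bicliqueEdges_comm (A B : Finset V) : bicliqueEdges A B = bicliqueEdges B A := by
  ext e
  constructor <;> rintro ⟨a, ha, b, hb, rfl⟩ <;> exact ⟨b, hb, a, ha, Sym2.eq_swap⟩

lemma bicliqueEdges_subset_edgeSet {G : SimpleGraph V} {A B : Finset V}
    (h : ∀ a ∈ A, ∀ b ∈ B, G.Adj a b) : bicliqueEdges A B ⊆ G.edgeSet := by
  rintro e ⟨a, ha, b, hb, rfl⟩
  exact h a ha b hb

lemma bicliqueEdges_union_left (A A' B : Finset V) :
    bicliqueEdges (A ∪ A') B = bicliqueEdges A B ∪ bicliqueEdges A' B := by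
  ext e
  constructor
  · rintro ⟨a, ha, b, hb, rfl⟩
    rcases Finset.mem_union.mp ha with h | h
    · exact Or.inl ⟨a, h, b, hb, rfl⟩
    · exact Or.inr ⟨a, h, b, hb, rfl⟩
  · rintro (⟨a, ha, b, hb, rfl⟩ | ⟨a, ha, b, hb, rfl⟩)
    · exact ⟨a, Finset.mem_union_left _ ha, b, hb, rfl⟩
    · exact ⟨a, Finset.mem_union_right _ ha, b, hb, rfl⟩

lemma bicliqueEdges_union_right (A B B' : Finset V) :
    bicliqueEdges A (B ∪ B') = bicliqueEdges A B ∪ bicliqueEdges A B' := by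
  rw [bicliqueEdges_comm, bicliqueEdges_union_left, bicliqueEdges_comm B A,
    bicliqueEdges_comm B' A]

lemma mem_of_mem_bicliqueEdges {A B : Finset V} {e : Sym2 V} (he : e ∈ bicliqueEdges A B)
    {x : V} (hx : x ∈ e) : x ∈ A ∪ B := by
  classical
  obtain ⟨a, ha, b, hb, rfl⟩ := he
  rcases Sym2.mem_iff.mp hx with rfl | rfl
  · exact Finset.mem_union_left _ ha
  · exact Finset.mem_union_right _ hb

/-- singleton biclique edges contain the center -/
lemma center_mem_of_mem_bicliqueEdges {v : V} {B : Finset V} {e : Sym2 V}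
    (he : e ∈ bicliqueEdges {v} B) : v ∈ e := by
  obtain ⟨a, ha, b, hb, rfl⟩ := he
  rw [Finset.mem_singleton] at ha
  subst ha
  exact Sym2.mem_mk_left _ _

lemma disjoint_bicliqueEdges_erase {A B : Finset V} (hAB : Disjoint A B)
    (v : V) : Disjoint (bicliqueEdges {v} B) (bicliqueEdges (A.erase v) B) := by
  rw [Set.disjoint_left]
  rintro e ⟨a, ha, b, hb, rfl⟩ ⟨a', ha', b', hb', he⟩
  rw [Finset.mem_singleton] at ha
  subst ha
  rcases Sym2.eq_iff.mp he with ⟨h1, h2⟩ | ⟨h1, h2⟩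
  · exact (Finset.mem_erase.mp ha').1 h1.symm
  · subst h2
    exact (Finset.disjoint_left.mp hAB (Finset.mem_of_mem_erase ha')) hb

end Lemmas
section Transport

variable {V : Type*} [DecidableEq V]

/-- decomposition over an arbitrary index type -/
def DecompOn (G : SimpleGraph V) {ι : Sort*} (P : ι → Finset V × Finset V) : Prop :=
  (∀ i, IsBicliqueIn G (P i).1 (P i).2) ∧
  (∀ i j, i ≠ j →
    Disjoint (bicliqueEdges (P i).1 (P i).2) (bicliqueEdges (P j).1 (P j).2)) ∧
  (⋃ i, bicliqueEdges (P i).1 (P i).2) = G.edgeSet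

lemma decompOn_transport {G : SimpleGraph V} {ι : Type*} [Fintype ι]
    {P : ι → Finset V × Finset V} (h : DecompOn G P) :
    ∃ Q : Fin (Fintype.card ι) → Finset V × Finset V,
      IsBicliqueDecomp G (Fintype.card ι) Q := by
  obtain ⟨h1, h2, h3⟩ := h
  refine ⟨P ∘ (Fintype.equivFin ι).symm, fun i => h1 _, fun i j hij => h2 _ _ ?_, ?_⟩
  · exact fun hc => hij ((Fintype.equivFin ι).symm.injective hc)
  · rw [← h3]
    exact ((Fintype.equivFin ι).symm.iSup_comp (g := fun i => bicliqueEdges (P i).1 (P i).2))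

lemma mem_tauSet {G : SimpleGraph V} {ι : Type*} [Fintype ι]
    {P : ι → Finset V × Finset V} (h : DecompOn G P) :
    Fintype.card ι ∈ {m | ∃ P : Fin m → Finset V × Finset V, IsBicliqueDecomp G m P} :=
  decompOn_transport h

lemma tauSet_nonempty [Fintype V] (G : SimpleGraph V) :
    {m | ∃ P : Fin m → Finset V × Finset V, IsBicliqueDecomp G m P}.Nonempty := by
  classical
  have hfin : G.edgeSet.Finite := Set.toFinite _
  set E := hfin.toFinset with hE
  have hmem : ∀ e : E, (e : Sym2 V) ∈ G.edgeSet := fun e => hfin.mem_toFinset.mp e.2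
  have hrep : ∀ e : E, ∃ p : V × V, (e : Sym2 V) = s(p.1, p.2) ∧ G.Adj p.1 p.2 := by
    rintro ⟨e, he⟩
    induction e with
    | _ a b =>
      refine ⟨(a, b), rfl, ?_⟩
      exact hfin.mem_toFinset.mp he
  choose rep hrep1 hrep2 using hrep
  refine ⟨Fintype.card E, decompOn_transport (P := fun e : E => ({(rep e).1}, {(rep e).2})) ?_⟩
  refine ⟨?_, ?_, ?_⟩
  · intro e
    refine ⟨Finset.singleton_nonempty _, Finset.singleton_nonempty _, ?_, ?_⟩
    · simpa using (hrep2 e).ne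
    · intro a ha b hb
      rw [Finset.mem_singleton] at ha hb
      subst ha; subst hb; exact hrep2 e
  · intro i j hij
    rw [Set.disjoint_left]
    rintro e ⟨a, ha, b, hb, rfl⟩ ⟨a', ha', b', hb', he⟩
    simp only [Finset.mem_singleton] at ha hb ha' hb'
    subst ha; subst hb; subst ha'; subst hb'
    apply hij
    apply Subtype.ext
    rw [hrep1 i, hrep1 j, he]
  · ext e
    simp only [Set.mem_iUnion]
    constructor
    · rintro ⟨i, a, ha, b, hb, rfl⟩
      simp only [Finset.mem_singleton] at ha hb
      subst ha; subst hb
      rw [← hrep1 i]; exact hmem i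
    · intro he
      exact ⟨⟨e, hfin.mem_toFinset.mpr he⟩, (rep _).1, Finset.mem_singleton_self _,
        (rep _).2, Finset.mem_singleton_self _, hrep1 ⟨e, hfin.mem_toFinset.mpr he⟩⟩

lemma tau_mem [Fintype V] (G : SimpleGraph V) :
    ∃ P : Fin (tau G) → Finset V × Finset V, IsBicliqueDecomp G (tau G) P :=
  Nat.sInf_mem (tauSet_nonempty G)

lemma tau_le [Fintype V] {G : SimpleGraph V} {ι : Type*} [Fintype ι]
    {P : ι → Finset V × Finset V} (h : DecompOn G P) : tau G ≤ Fintype.card ι :=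
  Nat.sInf_le (mem_tauSet h)

end Transport
section Modify

variable {V : Type*} [DecidableEq V] [Fintype V]

/-- potential function -/
def phi {m : ℕ} (P : Fin m → Finset V × Finset V) : ℕ :=
  ∑ i, ((P i).1.card - 1) * ((P i).2.card - 1)

lemma if_pair_pos {c : Prop} [Decidable c] (hc : c) (X Y : Finset V × Finset V) :
    (if c then X else Y) = X := if_pos hc

lemma if_pair_neg {c : Prop} [Decidable c] (hc : ¬ c) (X Y : Finset V × Finset V) :
    (if c then X else Y) = Y := if_neg hc

/-- merging two stars with the same center gives a smaller decomposition -/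
lemma tau_le_of_merge {G : SimpleGraph V} {m : ℕ} {P : Fin m → Finset V × Finset V}
    (hP : IsBicliqueDecomp G m P) {i j : Fin m} (hij : i ≠ j) {v : V} {L L' : Finset V}
    (hPi : P i = ({v}, L)) (hPj : P j = ({v}, L')) : tau G ≤ m - 1 := by
  obtain ⟨h1, h2, h3⟩ := hP
  have hLne : L.Nonempty := by have := (h1 i).2.1; rwa [hPi] at this
  have hvL : v ∉ L := by
    have := (h1 i).2.2.1; rw [hPi] at this
    simpa using Finset.disjoint_left.mp this (Finset.mem_singleton_self v)
  have hvL' : v ∉ L' := by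
    have := (h1 j).2.2.1; rw [hPj] at this
    simpa using Finset.disjoint_left.mp this (Finset.mem_singleton_self v)
  have e1 : bicliqueEdges {v} (L ∪ L') = bicliqueEdges (P i).1 (P i).2 ∪
      bicliqueEdges (P j).1 (P j).2 := by
    rw [hPi, hPj, bicliqueEdges_union_right]
  have hcard : Fintype.card {k : Fin m // k ≠ j} = m - 1 := by
    simp [Fintype.card_subtype_compl]
  set Q : {k : Fin m // k ≠ j} → Finset V × Finset V :=
    fun k => if k.1 = i then ({v}, L ∪ L') else P k.1 with hQ
  have hQi : ∀ (k : {k : Fin m // k ≠ j}), k.1 = i → Q k = ({v}, L ∪ L') := by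
    intro k hk; rw [hQ]; dsimp only; rw [if_pos hk]
  have hQn : ∀ (k : {k : Fin m // k ≠ j}), k.1 ≠ i → Q k = P k.1 := by
    intro k hk; rw [hQ]; dsimp only; rw [if_neg hk]
  calc tau G ≤ Fintype.card {k : Fin m // k ≠ j} := by
        refine tau_le (P := Q) ⟨?_, ?_, ?_⟩
        · rintro k
          by_cases hk : k.1 = i
          · rw [hQi k hk]
            refine ⟨Finset.singleton_nonempty _, hLne.mono Finset.subset_union_left, ?_, ?_⟩
            · simp [hvL, hvL']
            · intro a ha b hb
              rw [Finset.mem_singleton] at ha; rw [ha]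
              rcases Finset.mem_union.mp hb with hb | hb
              · have := (h1 i).2.2.2; rw [hPi] at this
                exact this v (Finset.mem_singleton_self v) b hb
              · have := (h1 j).2.2.2; rw [hPj] at this
                exact this v (Finset.mem_singleton_self v) b hb
          · rw [hQn k hk]; exact h1 k.1
        · rintro k k' hkk'
          have hne : k.1 ≠ k'.1 := fun hc => hkk' (Subtype.ext hc)
          by_cases ha : k.1 = i <;> by_cases hb : k'.1 = i
          · exact absurd (ha.trans hb.symm) hne
          · rw [hQi k ha, hQn k' hb]
            dsimp only
            rw [e1, Set.disjoint_union_left]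
            exact ⟨h2 _ _ (ha ▸ hne), h2 _ _ (Ne.symm k'.2)⟩
          · rw [hQn k ha, hQi k' hb]
            dsimp only
            rw [e1, Set.disjoint_union_right]
            exact ⟨h2 _ _ (hb ▸ hne), h2 _ _ k.2⟩
          · rw [hQn k ha, hQn k' hb]
            exact h2 _ _ hne
        · rw [← h3]
          ext e
          simp only [Set.mem_iUnion]
          constructor
          · rintro ⟨k, he⟩
            by_cases hk : k.1 = i
            · rw [hQi k hk] at he
              dsimp only at he
              rw [e1] at he
              rcases he with he | he
              · exact ⟨i, he⟩
              · exact ⟨j, he⟩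
            · rw [hQn k hk] at he
              exact ⟨k.1, he⟩
          · rintro ⟨k, he⟩
            by_cases hk : k = j
            · refine ⟨⟨i, hij⟩, ?_⟩
              rw [hQi ⟨i, hij⟩ rfl]
              dsimp only
              rw [e1]
              exact Or.inr (hk ▸ he)
            · by_cases hki : k = i
              · refine ⟨⟨i, hij⟩, ?_⟩
                rw [hQi ⟨i, hij⟩ rfl]
                dsimp only
                rw [e1]
                exact Or.inl (hki ▸ he)
              · exact ⟨⟨k, hk⟩, by rw [hQn ⟨k, hk⟩ hki]; exact he⟩
    _ = m - 1 := hcard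

end Modify
section Swap

variable {V : Type*} [DecidableEq V] [Fintype V]

/-- moving a star-center out of a nontrivial piece decreases phi -/
lemma swap_op {G : SimpleGraph V} {m : ℕ} {P : Fin m → Finset V × Finset V}
    (hP : IsBicliqueDecomp G m P) {i j : Fin m} (hij : i ≠ j) {v : V} {L : Finset V}
    (hPj : P j = ({v}, L)) (hv : v ∈ (P i).1) (hA : 2 ≤ (P i).1.card)
    (hB : 2 ≤ (P i).2.card) :
    ∃ P' : Fin m → Finset V × Finset V, IsBicliqueDecomp G m P' ∧ phi P' < phi P := by
  obtain ⟨h1, h2, h3⟩ := hP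
  set A := (P i).1 with hAdef
  set B := (P i).2 with hBdef
  have hABd : Disjoint A B := (h1 i).2.2.1
  have hAB : ∀ a ∈ A, ∀ b ∈ B, G.Adj a b := (h1 i).2.2.2
  have hvB : v ∉ B := Finset.disjoint_left.mp hABd hv
  have hvL : v ∉ L := by
    have := (h1 j).2.2.1; rw [hPj] at this
    simpa using Finset.disjoint_left.mp this (Finset.mem_singleton_self v)
  have hLne : L.Nonempty := by have := (h1 j).2.1; rwa [hPj] at this
  have hAsplit : A = {v} ∪ A.erase v := by
    rw [← Finset.insert_eq, Finset.insert_erase hv]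
  have eA : bicliqueEdges A B = bicliqueEdges {v} B ∪ bicliqueEdges (A.erase v) B := by
    conv_lhs => rw [hAsplit]
    rw [bicliqueEdges_union_left]
  have dA : Disjoint (bicliqueEdges {v} B) (bicliqueEdges (A.erase v) B) :=
    disjoint_bicliqueEdges_erase hABd v
  have eJ : bicliqueEdges {v} (L ∪ B) = bicliqueEdges (P j).1 (P j).2 ∪
      bicliqueEdges {v} B := by
    rw [bicliqueEdges_union_right, hPj]
  have hsubI : bicliqueEdges (A.erase v) B ⊆ bicliqueEdges (P i).1 (P i).2 := by
    rw [← hAdef, ← hBdef, eA]; exact Set.subset_union_right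
  have hsubI' : bicliqueEdges {v} B ⊆ bicliqueEdges (P i).1 (P i).2 := by
    rw [← hAdef, ← hBdef, eA]; exact Set.subset_union_left
  set Q : Fin m → Finset V × Finset V :=
    fun k => if k = i then (A.erase v, B) else if k = j then ({v}, L ∪ B) else P k with hQdef
  have hQi : Q i = (A.erase v, B) := by rw [hQdef]; dsimp only; rw [if_pos rfl]
  have hQj : Q j = ({v}, L ∪ B) := by
    rw [hQdef]; dsimp only; rw [if_neg (Ne.symm hij), if_pos rfl]
  have hQk : ∀ k, k ≠ i → k ≠ j → Q k = P k := by
    intro k h h'; rw [hQdef]; dsimp only; rw [if_neg h, if_neg h']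
  have hEi : bicliqueEdges (Q i).1 (Q i).2 = bicliqueEdges (A.erase v) B := by rw [hQi]
  have hEj : bicliqueEdges (Q j).1 (Q j).2 =
      bicliqueEdges (P j).1 (P j).2 ∪ bicliqueEdges {v} B := by rw [hQj]; exact eJ
  have herasecard : (A.erase v).card = A.card - 1 := Finset.card_erase_of_mem hv
  have heraseN : (A.erase v).Nonempty := by
    rw [← Finset.card_pos, herasecard]; omega
  refine ⟨Q, ⟨?_, ?_, ?_⟩, ?_⟩
  · intro k
    by_cases hk : k = i
    · rw [hk, hQi]
      exact ⟨heraseN, (h1 i).2.1, Finset.disjoint_of_subset_left (Finset.erase_subset _ _) hABd,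
        fun a ha b hb => hAB a (Finset.mem_of_mem_erase ha) b hb⟩
    · by_cases hk' : k = j
      · rw [hk', hQj]
        refine ⟨Finset.singleton_nonempty _, hLne.mono Finset.subset_union_left, ?_, ?_⟩
        · simp [hvL, hvB]
        · intro a ha b hb
          rw [Finset.mem_singleton] at ha; rw [ha]
          rcases Finset.mem_union.mp hb with hb | hb
          · have := (h1 j).2.2.2; rw [hPj] at this
            exact this v (Finset.mem_singleton_self v) b hb
          · exact hAB v hv b hb
      · rw [hQk k hk hk']; exact h1 k
  · intro k k' hkk'
    by_cases hk1 : k = i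
    · rw [hk1, hEi]
      have hik' : i ≠ k' := fun h => hkk' (hk1.trans h)
      by_cases hk2 : k' = j
      · rw [hk2, hEj, Set.disjoint_union_right]
        exact ⟨Set.disjoint_of_subset hsubI (subset_refl _) (h2 _ _ (hk2 ▸ hik')),
          dA.symm⟩
      · rw [hQk k' (fun h => hik' h.symm) hk2]
        exact Set.disjoint_of_subset hsubI (subset_refl _) (h2 _ _ hik')
    · by_cases hk1' : k = j
      · rw [hk1', hEj]
        have hjk' : j ≠ k' := fun h => hkk' (hk1'.trans h)
        by_cases hk2 : k' = i
        · rw [hk2, hEi, Set.disjoint_union_left]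
          exact ⟨Set.disjoint_of_subset (subset_refl _) hsubI (h2 _ _ (hk2 ▸ hjk')), dA⟩
        · rw [hQk k' hk2 (fun h => hjk' h.symm), Set.disjoint_union_left]
          exact ⟨h2 _ _ hjk',
            Set.disjoint_of_subset hsubI' (subset_refl _) (h2 _ _ (Ne.symm hk2))⟩
      · rw [hQk k hk1 hk1']
        by_cases hk2 : k' = i
        · rw [hk2, hEi]
          exact Set.disjoint_of_subset (subset_refl _) hsubI
            (h2 _ _ (fun h => hkk' (h.trans hk2.symm)))
        · by_cases hk2' : k' = j
          · rw [hk2', hEj, Set.disjoint_union_right]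
            exact ⟨h2 _ _ (fun h => hkk' (h.trans hk2'.symm)),
              Set.disjoint_of_subset (subset_refl _) hsubI' (h2 _ _ hk1)⟩
          · rw [hQk k' hk2 hk2']
            exact h2 _ _ hkk'
  · rw [← h3]
    ext e
    simp only [Set.mem_iUnion]
    constructor
    · rintro ⟨k, he⟩
      by_cases hk : k = i
      · rw [hk, hEi] at he
        exact ⟨i, hsubI he⟩
      · by_cases hk' : k = j
        · rw [hk', hEj] at he
          rcases he with he | he
          · exact ⟨j, he⟩
          · exact ⟨i, hsubI' he⟩
        · rw [hQk k hk hk'] at he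
          exact ⟨k, he⟩
    · rintro ⟨k, he⟩
      by_cases hk : k = i
      · rw [hk, ← hAdef, ← hBdef, eA] at he
        rcases he with he | he
        · exact ⟨j, by rw [hEj]; exact Or.inr he⟩
        · exact ⟨i, by rw [hEi]; exact he⟩
      · by_cases hk' : k = j
        · exact ⟨j, by rw [hEj]; exact Or.inl (hk' ▸ he)⟩
        · exact ⟨k, by rw [hQk k hk hk']; exact he⟩
  · unfold phi
    refine Finset.sum_lt_sum (fun k _ => ?_) ⟨i, Finset.mem_univ i, ?_⟩
    · by_cases hk : k = i
      · rw [hk, hQi]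
        dsimp only
        rw [herasecard, ← hAdef, ← hBdef]
        apply Nat.mul_le_mul_right
        omega
      · by_cases hk' : k = j
        · rw [hk', hQj, hPj]
          simp
        · rw [hQk k hk hk']
    · rw [hQi]
      dsimp only
      rw [herasecard, ← hAdef, ← hBdef]
      have h2' : A.card - 1 - 1 < A.card - 1 := by omega
      exact Nat.mul_lt_mul_of_lt_of_le h2' (le_refl _) (by omega)

end Swap
section MinDecomp

variable {V : Type*} [DecidableEq V] [Fintype V]

lemma isBicliqueIn_swap {G : SimpleGraph V} {A B : Finset V} (h : IsBicliqueIn G A B) :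
    IsBicliqueIn G B A :=
  ⟨h.2.1, h.1, h.2.2.1.symm, fun b hb a ha => (h.2.2.2 a ha b hb).symm⟩

lemma exists_min_decomp (G : SimpleGraph V) :
    ∃ P : Fin (tau G) → Finset V × Finset V, IsBicliqueDecomp G (tau G) P ∧
      (∀ i, (P i).1.card = 1 ∨ (2 ≤ (P i).1.card ∧ 2 ≤ (P i).2.card)) ∧
      (∀ Q : Fin (tau G) → Finset V × Finset V, IsBicliqueDecomp G (tau G) Q →
        phi P ≤ phi Q) := by
  classical
  set N : Set ℕ := {n | ∃ Q : Fin (tau G) → Finset V × Finset V,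
    IsBicliqueDecomp G (tau G) Q ∧ phi Q = n} with hN
  have hNne : N.Nonempty := by
    obtain ⟨Q, hQ⟩ := tau_mem G
    exact ⟨phi Q, Q, hQ, rfl⟩
  obtain ⟨Q0, hQ0, hphiQ0⟩ := Nat.sInf_mem hNne
  have hmin : ∀ R : Fin (tau G) → Finset V × Finset V, IsBicliqueDecomp G (tau G) R →
      phi Q0 ≤ phi R := by
    intro R hR
    rw [hphiQ0]
    exact Nat.sInf_le ⟨R, hR, rfl⟩
  set P : Fin (tau G) → Finset V × Finset V :=
    fun i => if (Q0 i).1.card = 1 then Q0 i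
      else if (Q0 i).2.card = 1 then ((Q0 i).2, (Q0 i).1) else Q0 i with hPdef
  have hcases : ∀ i, (P i = Q0 i ∧ ((Q0 i).1.card = 1 ∨ ((Q0 i).1.card ≠ 1 ∧
      (Q0 i).2.card ≠ 1))) ∨ (P i = ((Q0 i).2, (Q0 i).1) ∧ (Q0 i).2.card = 1) := by
    intro i
    rw [hPdef]; dsimp only
    by_cases h1 : (Q0 i).1.card = 1
    · rw [if_pos h1]; exact Or.inl ⟨rfl, Or.inl h1⟩
    · by_cases h2 : (Q0 i).2.card = 1
      · rw [if_neg h1, if_pos h2]; exact Or.inr ⟨rfl, h2⟩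
      · rw [if_neg h1, if_neg h2]; exact Or.inl ⟨rfl, Or.inr ⟨h1, h2⟩⟩
  have hE : ∀ i, bicliqueEdges (P i).1 (P i).2 = bicliqueEdges (Q0 i).1 (Q0 i).2 := by
    intro i
    rcases hcases i with ⟨h, _⟩ | ⟨h, _⟩
    · rw [h]
    · rw [h]; exact bicliqueEdges_comm _ _
  obtain ⟨hb, hd, hu⟩ := hQ0
  have hPdecomp : IsBicliqueDecomp G (tau G) P := by
    refine ⟨fun i => ?_, fun i j hij => ?_, ?_⟩
    · rcases hcases i with ⟨h, _⟩ | ⟨h, _⟩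
      · rw [h]; exact hb i
      · rw [h]; exact isBicliqueIn_swap (hb i)
    · rw [hE i, hE j]; exact hd i j hij
    · rw [← hu]
      exact Set.iUnion_congr hE
  have hphiP : phi P = phi Q0 := by
    unfold phi
    refine Finset.sum_congr rfl fun i _ => ?_
    rcases hcases i with ⟨h, _⟩ | ⟨h, _⟩
    · rw [h]
    · rw [h]; exact Nat.mul_comm _ _
  refine ⟨P, hPdecomp, fun i => ?_, fun Q hQ => by rw [hphiP]; exact hmin Q hQ⟩
  have hA1 : 1 ≤ (Q0 i).1.card := Finset.card_pos.mpr (hb i).1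
  have hB1 : 1 ≤ (Q0 i).2.card := Finset.card_pos.mpr (hb i).2.1
  rcases hcases i with ⟨h, hl | ⟨h1, h2⟩⟩ | ⟨h, hc⟩
  · rw [h]; exact Or.inl hl
  · rw [h]; exact Or.inr ⟨by omega, by omega⟩
  · rw [h]; exact Or.inl hc

end MinDecomp

section SwapAt

variable {V : Type*} [DecidableEq V] [Fintype V]

lemma swapAt_decomp {G : SimpleGraph V} {m : ℕ} {P : Fin m → Finset V × Finset V}
    (hP : IsBicliqueDecomp G m P) (j : Fin m) :
    IsBicliqueDecomp G m (fun k => if k = j then ((P j).2, (P j).1) else P k) ∧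
    phi (fun k => if k = j then ((P j).2, (P j).1) else P k) = phi P := by
  obtain ⟨h1, h2, h3⟩ := hP
  set Q : Fin m → Finset V × Finset V :=
    fun k => if k = j then ((P j).2, (P j).1) else P k with hQ
  have hcases : ∀ k, Q k = P k ∨ Q k = ((P k).2, (P k).1) := by
    intro k
    rw [hQ]; dsimp only
    by_cases h : k = j
    · rw [if_pos h, h]; exact Or.inr rfl
    · rw [if_neg h]; exact Or.inl rfl
  have hE : ∀ k, bicliqueEdges (Q k).1 (Q k).2 = bicliqueEdges (P k).1 (P k).2 := by
    intro k
    rcases hcases k with h | h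
    · rw [h]
    · rw [h]; exact bicliqueEdges_comm _ _
  refine ⟨⟨fun k => ?_, fun k k' hkk' => ?_, ?_⟩, ?_⟩
  · rcases hcases k with h | h
    · rw [h]; exact h1 k
    · rw [h]; exact isBicliqueIn_swap (h1 k)
  · rw [hE k, hE k']; exact h2 k k' hkk'
  · rw [← h3]; exact Set.iUnion_congr hE
  · unfold phi
    refine Finset.sum_congr rfl fun k _ => ?_
    rcases hcases k with h | h
    · rw [h]
    · rw [h]; exact Nat.mul_comm _ _

end SwapAt
section Induced

variable {V : Type*} [DecidableEq V]

/-- embedding of a subtype finset -/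
def valEmb {U : Set V} : ↑U ↪ V := ⟨Subtype.val, Subtype.val_injective⟩

lemma bicliqueEdges_map {α β : Type*} (f : α ↪ β) (A B : Finset α) :
    bicliqueEdges (A.map f) (B.map f) = Sym2.map f '' bicliqueEdges A B := by
  ext e
  constructor
  · rintro ⟨a, ha, b, hb, rfl⟩
    rw [Finset.mem_map] at ha hb
    obtain ⟨a', ha', rfl⟩ := ha
    obtain ⟨b', hb', rfl⟩ := hb
    exact ⟨s(a', b'), ⟨a', ha', b', hb', rfl⟩, by simp⟩
  · rintro ⟨e', ⟨a, ha, b, hb, rfl⟩, rfl⟩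
    exact ⟨f a, Finset.mem_map_of_mem f ha, f b, Finset.mem_map_of_mem f hb, by simp⟩

/-- lifting a finset contained in U to the subtype -/
def liftF (U : Finset V) (A : Finset V) (h : A ⊆ U) : Finset ↑(U : Set V) :=
  A.attach.map ⟨fun x => ⟨x.1, by simpa using h x.2⟩,
    fun a b hab => by injection hab with h'; exact Subtype.ext h'⟩

lemma mem_liftF {U A : Finset V} {h : A ⊆ U} {x : ↑(U : Set V)} :
    x ∈ liftF U A h ↔ ↑x ∈ A := by
  simp only [liftF, Finset.mem_map, Finset.mem_attach, Function.Embedding.coeFn_mk,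
    true_and]
  constructor
  · rintro ⟨a, rfl⟩; exact a.2
  · intro hx; exact ⟨⟨↑x, hx⟩, Subtype.ext rfl⟩

lemma liftF_map_val {U A : Finset V} {h : A ⊆ U} :
    (liftF U A h).map valEmb = A := by
  ext x
  simp only [Finset.mem_map]
  constructor
  · rintro ⟨y, hy, rfl⟩; exact mem_liftF.mp hy
  · intro hx
    exact ⟨⟨x, by simpa using h hx⟩, mem_liftF.mpr hx, rfl⟩

lemma liftF_card {U A : Finset V} {h : A ⊆ U} : (liftF U A h).card = A.card := by
  rw [liftF, Finset.card_map, Finset.card_attach]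

lemma liftF_disjoint {U A B : Finset V} {hA : A ⊆ U} {hB : B ⊆ U} (h : Disjoint A B) :
    Disjoint (liftF U A hA) (liftF U B hB) := by
  rw [Finset.disjoint_left]
  intro x hx hx'
  exact Finset.disjoint_left.mp h (mem_liftF.mp hx) (mem_liftF.mp hx')

lemma induce_adj_iff {G : SimpleGraph V} {U : Set V} {a b : ↑U} :
    (G.induce U).Adj a b ↔ G.Adj ↑a ↑b := by simp

lemma mem_edgeSet_induce {G : SimpleGraph V} {U : Set V} {e : Sym2 ↑U} :
    e ∈ (G.induce U).edgeSet ↔ Sym2.map Subtype.val e ∈ G.edgeSet := by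
  induction e with
  | _ a b => simp [SimpleGraph.mem_edgeSet]

lemma liftF_bicliqueEdges {U A B : Finset V} (hA : A ⊆ U) (hB : B ⊆ U) :
    Sym2.map Subtype.val '' bicliqueEdges (liftF U A hA) (liftF U B hB) =
      bicliqueEdges A B := by
  have := bicliqueEdges_map (valEmb (U := (U : Set V))) (liftF U A hA) (liftF U B hB)
  rw [liftF_map_val, liftF_map_val] at this
  exact this.symm

lemma sym2_val_injective {U : Set V} :
    Function.Injective (Sym2.map (Subtype.val : ↑U → V)) :=
  Sym2.map.injective Subtype.val_injective

/-- nontrivial decomposition over an arbitrary index type -/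
def NDecompOn (G : SimpleGraph V) {ι : Sort*} (P : ι → Finset V × Finset V) : Prop :=
  (∀ i, IsNontrivialBicliqueIn G (P i).1 (P i).2) ∧
  (∀ i j, i ≠ j →
    Disjoint (bicliqueEdges (P i).1 (P i).2) (bicliqueEdges (P j).1 (P j).2)) ∧
  (⋃ i, bicliqueEdges (P i).1 (P i).2) = G.edgeSet

lemma ndecompOn_transport {G : SimpleGraph V} {ι : Type*} [Fintype ι]
    {P : ι → Finset V × Finset V} (h : NDecompOn G P) :
    ∃ Q : Fin (Fintype.card ι) → Finset V × Finset V,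
      IsNontrivialBicliqueDecomp G (Fintype.card ι) Q := by
  obtain ⟨h1, h2, h3⟩ := h
  refine ⟨P ∘ (Fintype.equivFin ι).symm, fun i => h1 _, fun i j hij => h2 _ _ ?_, ?_⟩
  · exact fun hc => hij ((Fintype.equivFin ι).symm.injective hc)
  · rw [← h3]
    exact ((Fintype.equivFin ι).symm.iSup_comp (g := fun i => bicliqueEdges (P i).1 (P i).2))

/-- the ℕ-valued set for tau' -/
lemma tau'_eq_coe {W' : Type*} (H : SimpleGraph W')
    (hne : {k : ℕ | ∃ P : Fin k → Finset W' × Finset W',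
      IsNontrivialBicliqueDecomp H k P}.Nonempty) :
    tau' H = (sInf {k : ℕ | ∃ P : Fin k → Finset W' × Finset W',
      IsNontrivialBicliqueDecomp H k P} : ℕ) := by
  set N := {k : ℕ | ∃ P : Fin k → Finset W' × Finset W',
      IsNontrivialBicliqueDecomp H k P} with hNdef
  apply le_antisymm
  · exact sInf_le ⟨sInf N, rfl, Nat.sInf_mem hne⟩
  · apply le_sInf
    rintro t ⟨k, rfl, hk⟩
    exact_mod_cast Nat.sInf_le (hk : k ∈ N)

end Induced
/-- Lemma 3.4: for every finite simple graph `G = (V,E)` there is `U ⊆ V`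
with `τ(G) = |V| - |U| + τ'(G[U])`. -/
theorem tau_eq_sub_add_tau' {V : Type*} [Fintype V] [DecidableEq V] (G : SimpleGraph V) :
    ∃ U : Finset V, (tau G : ℕ∞) =
      ((Fintype.card V - U.card : ℕ) : ℕ∞) + tau' (G.induce (U : Set V)) := by
  classical
  obtain ⟨P, hP, hnorm, hmin⟩ := exists_min_decomp G
  have h1 := hP.1
  have h2 := hP.2.1
  have h3 := hP.2.2
  set triv : Finset (Fin (tau G)) := Finset.univ.filter (fun i => (P i).1.card = 1) with htriv
  have htrivIff : ∀ i, i ∈ triv ↔ (P i).1.card = 1 := by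
    intro i; rw [htriv, Finset.mem_filter]; simp
  have hcex : ∀ i : Fin (tau G), ∃ v, v ∈ (P i).1 := fun i => (h1 i).1
  choose c hc using hcex
  have hcen : ∀ i ∈ triv, (P i).1 = {c i} := by
    intro i hi
    obtain ⟨v, hv⟩ := Finset.card_eq_one.mp ((htrivIff i).mp hi)
    have hcv : c i = v := by have := hc i; rw [hv, Finset.mem_singleton] at this; exact this
    rw [hv, hcv]
  have hstar : ∀ i ∈ triv, P i = ({c i}, (P i).2) := by
    intro i hi
    rw [← hcen i hi]
  -- nontrivial pieces have both classes large
  have hbig : ∀ j, j ∉ triv → 2 ≤ (P j).1.card ∧ 2 ≤ (P j).2.card := by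
    intro j hj
    rcases hnorm j with h | h
    · exact absurd ((htrivIff j).mpr h) hj
    · exact h
  -- distinct star centers
  have hdist : ∀ i ∈ triv, ∀ j ∈ triv, i ≠ j → c i ≠ c j := by
    intro i hi j hj hij hcc
    have hj' : P j = ({c i}, (P j).2) := by rw [hcc]; exact hstar j hj
    have hle := tau_le_of_merge hP hij (hstar i hi) hj'
    have := i.pos
    omega
  -- star centers avoid nontrivial pieces
  have havoid : ∀ i ∈ triv, ∀ j, j ∉ triv → c i ∉ (P j).1 ∧ c i ∉ (P j).2 := by
    intro i hi j hj
    have hij : j ≠ i := fun h => hj (h ▸ hi)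
    obtain ⟨hbig1, hbig2⟩ := hbig j hj
    constructor
    · intro hv
      obtain ⟨P', hP', hphi⟩ := swap_op hP hij (hstar i hi) hv hbig1 hbig2
      exact absurd (hmin P' hP') (by omega)
    · intro hv
      obtain ⟨hPswD, hphisw⟩ := swapAt_decomp hP j
      set Psw : Fin (tau G) → Finset V × Finset V :=
        fun k => if k = j then ((P j).2, (P j).1) else P k with hPswdef
      have hPswi : Psw i = P i := by
        rw [hPswdef]; dsimp only; rw [if_neg (Ne.symm hij)]
      have hPswj : Psw j = ((P j).2, (P j).1) := by
        rw [hPswdef]; dsimp only; rw [if_pos rfl]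
      have hstar' : Psw i = ({c i}, (Psw i).2) := by rw [hPswi]; exact hstar i hi
      have hv' : c i ∈ (Psw j).1 := by rw [hPswj]; exact hv
      have hA' : 2 ≤ (Psw j).1.card := by rw [hPswj]; exact hbig2
      have hB' : 2 ≤ (Psw j).2.card := by rw [hPswj]; exact hbig1
      obtain ⟨P', hP', hphi⟩ := swap_op hPswD hij hstar' hv' hA' hB'
      have := hmin P' hP'
      omega
  -- the set of star centers and its complement
  set W : Finset V := triv.image c with hWdef
  have hWcard : W.card = triv.card := by
    rw [hWdef]
    apply Finset.card_image_of_injOn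
    intro i hi j hj hcc
    by_contra hne
    exact hdist i hi j hj hne hcc
  set U : Finset V := Finset.univ \ W with hUdef
  have hmemU : ∀ x, x ∈ U ↔ x ∉ W := by intro x; rw [hUdef]; simp
  have hcW : ∀ i ∈ triv, c i ∈ W := fun i hi => Finset.mem_image_of_mem c hi
  have hsubU : ∀ j, j ∉ triv → (P j).1 ⊆ U ∧ (P j).2 ⊆ U := by
    intro j hj
    constructor
    · intro x hx
      rw [hmemU]
      intro hxW
      obtain ⟨i, hi, rfl⟩ := Finset.mem_image.mp hxW
      exact (havoid i hi j hj).1 hx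
    · intro x hx
      rw [hmemU]
      intro hxW
      obtain ⟨i, hi, rfl⟩ := Finset.mem_image.mp hxW
      exact (havoid i hi j hj).2 hx
  have hinj : Function.Injective (Sym2.map (Subtype.val : ↑((U : Set V)) → V)) :=
    sym2_val_injective
  -- the nontrivial pieces give a nontrivial decomposition of the induced graph
  set NH : Set ℕ := {k : ℕ | ∃ Q : Fin k → Finset ↑((U : Set V)) × Finset ↑((U : Set V)),
    IsNontrivialBicliqueDecomp (G.induce (U : Set V)) k Q} with hNHdef
  have hsmem : Fintype.card {j : Fin (tau G) // j ∉ triv} ∈ NH := by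
    set PS : {j : Fin (tau G) // j ∉ triv} → Finset ↑((U : Set V)) × Finset ↑((U : Set V)) :=
      fun j => (liftF U (P j.1).1 (hsubU j.1 j.2).1, liftF U (P j.1).2 (hsubU j.1 j.2).2)
      with hPSdef
    have hPS1 : ∀ j, (PS j).1 = liftF U (P j.1).1 (hsubU j.1 j.2).1 := fun j => rfl
    have hPS2 : ∀ j, (PS j).2 = liftF U (P j.1).2 (hsubU j.1 j.2).2 := fun j => rfl
    have hEPS : ∀ j, Sym2.map Subtype.val '' bicliqueEdges (PS j).1 (PS j).2 =
        bicliqueEdges (P j.1).1 (P j.1).2 := by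
      intro j
      rw [hPS1, hPS2, liftF_bicliqueEdges]
    have hNB : ∀ j, IsNontrivialBicliqueIn (G.induce (U : Set V)) (PS j).1 (PS j).2 := by
      intro j
      refine ⟨?_, ?_, ?_, ?_⟩
      · rw [hPS1, liftF_card]; exact (hbig j.1 j.2).1
      · rw [hPS2, liftF_card]; exact (hbig j.1 j.2).2
      · rw [hPS1, hPS2]; exact liftF_disjoint (h1 j.1).2.2.1
      · intro a ha b hb
        rw [hPS1] at ha
        rw [hPS2] at hb
        exact induce_adj_iff.mpr ((h1 j.1).2.2.2 _ (mem_liftF.mp ha) _ (mem_liftF.mp hb))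
    refine ndecompOn_transport ⟨hNB, fun j j' hjj' => ?_, ?_⟩
    · have hne : j.1 ≠ j'.1 := fun hc => hjj' (Subtype.ext hc)
      have := h2 j.1 j'.1 hne
      rw [← hEPS j, ← hEPS j'] at this
      exact (Set.disjoint_image_iff hinj).mp this
    · ext e'
      simp only [Set.mem_iUnion]
      constructor
      · rintro ⟨j, he⟩
        exact bicliqueEdges_subset_edgeSet (hNB j).2.2.2 he
      · intro he'
        have hmap : Sym2.map Subtype.val e' ∈ G.edgeSet := mem_edgeSet_induce.mp he'
        rw [← h3] at hmap
        obtain ⟨j0, he⟩ := Set.mem_iUnion.mp hmap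
        by_cases hj0 : j0 ∈ triv
        · exfalso
          rw [hcen j0 hj0] at he
          have hcmem := center_mem_of_mem_bicliqueEdges he
          obtain ⟨y, hy, hyv⟩ := Sym2.mem_map.mp hcmem
          have : c j0 ∈ U := by rw [← hyv]; exact Finset.mem_coe.mp y.2
          exact (hmemU (c j0)).mp this (hcW j0 hj0)
        · obtain ⟨a, ha, b, hb, heq⟩ := he
          set x : ↑((U : Set V)) := ⟨a, Finset.mem_coe.mpr ((hsubU j0 hj0).1 ha)⟩
          set y : ↑((U : Set V)) := ⟨b, Finset.mem_coe.mpr ((hsubU j0 hj0).2 hb)⟩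
          have hee : e' = s(x, y) := by
            apply hinj
            rw [heq]
            rfl
          exact ⟨⟨j0, hj0⟩, x, (mem_liftF (h := (hsubU j0 hj0).1)).mpr ha, y,
            (mem_liftF (h := (hsubU j0 hj0).2)).mpr hb, hee⟩
  -- extract a minimum nontrivial decomposition of the induced graph
  have hNHne : NH.Nonempty := ⟨_, hsmem⟩
  have hkmem := Nat.sInf_mem hNHne
  obtain ⟨Q', hQ'⟩ := hkmem
  have hQ1 := hQ'.1
  have hQ2 := hQ'.2.1
  have hQ3 := hQ'.2.2
  have hks : sInf NH ≤ Fintype.card {j : Fin (tau G) // j ∉ triv} := Nat.sInf_le hsmem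
  have htau' : tau' (G.induce (U : Set V)) = ((sInf NH : ℕ) : ℕ∞) := by
    rw [hNHdef]
    exact tau'_eq_coe _ hNHne
  -- cardinality bookkeeping
  have hts : triv.card + Fintype.card {j : Fin (tau G) // j ∉ triv} = tau G := by
    have e1 : Fintype.card {j : Fin (tau G) // j ∉ triv} =
        Fintype.card (Fin (tau G)) - Fintype.card {j : Fin (tau G) // j ∈ triv} :=
      Fintype.card_subtype_compl _
    have e2 : Fintype.card {j : Fin (tau G) // j ∈ triv} = triv.card := by
      simpa using Fintype.card_coe triv
    have e3 : triv.card ≤ tau G := by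
      have := Finset.card_le_univ triv
      simpa using this
    rw [e1, e2, Fintype.card_fin]
    omega
  -- the combined decomposition: stars plus lifted nontrivial pieces
  have hle : tau G ≤ triv.card + sInf NH := by
    set PR : Fin (sInf NH) → Finset V × Finset V :=
      fun a => ((Q' a).1.map valEmb, (Q' a).2.map valEmb) with hPRdef
    have hPRE : ∀ a, bicliqueEdges (PR a).1 (PR a).2 =
        Sym2.map Subtype.val '' bicliqueEdges (Q' a).1 (Q' a).2 := by
      intro a
      rw [hPRdef]
      exact bicliqueEdges_map valEmb _ _
    have hPRsub : ∀ a : Fin (sInf NH), (PR a).1 ⊆ U ∧ (PR a).2 ⊆ U := by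
      intro a
      constructor
      · intro z hz
        rw [hPRdef] at hz
        obtain ⟨w, _, rfl⟩ := Finset.mem_map.mp hz
        exact Finset.mem_coe.mp w.2
      · intro z hz
        rw [hPRdef] at hz
        obtain ⟨w, _, rfl⟩ := Finset.mem_map.mp hz
        exact Finset.mem_coe.mp w.2
    have hPRbic : ∀ a, IsBicliqueIn G (PR a).1 (PR a).2 := by
      intro a
      refine ⟨?_, ?_, ?_, ?_⟩
      · rw [hPRdef]
        apply Finset.Nonempty.map
        rw [← Finset.card_pos]
        have := (hQ1 a).1
        omega
      · rw [hPRdef]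
        apply Finset.Nonempty.map
        rw [← Finset.card_pos]
        have := (hQ1 a).2.1
        omega
      · rw [hPRdef]
        dsimp only
        rw [Finset.disjoint_left]
        rintro z hz hz'
        obtain ⟨w, hw, rfl⟩ := Finset.mem_map.mp hz
        obtain ⟨w', hw', hww⟩ := Finset.mem_map.mp hz'
        have : w' = w := Subtype.val_injective hww
        rw [this] at hw'
        exact Finset.disjoint_left.mp (hQ1 a).2.2.1 hw hw'
      · intro z hz w hw
        rw [hPRdef] at hz hw
        obtain ⟨z', hz', rfl⟩ := Finset.mem_map.mp hz
        obtain ⟨w', hw', rfl⟩ := Finset.mem_map.mp hw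
        exact induce_adj_iff.mp ((hQ1 a).2.2.2 z' hz' w' hw')
    have hcard2 : Fintype.card ({i // i ∈ triv} ⊕ Fin (sInf NH)) = triv.card + sInf NH := by
      simp [Fintype.card_coe]
    rw [← hcard2]
    apply tau_le (P := Sum.elim (fun i : {i // i ∈ triv} => P i.1) PR)
    refine ⟨?_, ?_, ?_⟩
    · rintro (i | a)
      · exact h1 i.1
      · exact hPRbic a
    · have hLR : ∀ (i : {i // i ∈ triv}) (a : Fin (sInf NH)),
          Disjoint (bicliqueEdges (P i.1).1 (P i.1).2) (bicliqueEdges (PR a).1 (PR a).2) := by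
        intro i a
        rw [Set.disjoint_left]
        intro e he he'
        rw [hcen i.1 i.2] at he
        have hcmem : c i.1 ∈ e := center_mem_of_mem_bicliqueEdges he
        have : c i.1 ∈ (PR a).1 ∪ (PR a).2 := mem_of_mem_bicliqueEdges he' hcmem
        have hcU : c i.1 ∈ U := by
          rcases Finset.mem_union.mp this with h | h
          · exact (hPRsub a).1 h
          · exact (hPRsub a).2 h
        exact (hmemU _).mp hcU (hcW i.1 i.2)
      rintro (i | a) (i' | a') hne
      · apply h2
        intro hc'
        exact hne (by rw [Subtype.ext hc'])
      · exact hLR i a'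
      · exact (hLR i' a).symm
      · have : a ≠ a' := fun hc => hne (by rw [hc])
        simp only [Sum.elim_inr]
        rw [hPRE a, hPRE a']
        exact (Set.disjoint_image_iff hinj).mpr (hQ2 a a' this)
    · ext e
      simp only [Set.mem_iUnion]
      constructor
      · rintro ⟨i | a, he⟩
        · exact bicliqueEdges_subset_edgeSet (h1 i.1).2.2.2 he
        · exact bicliqueEdges_subset_edgeSet (hPRbic a).2.2.2 he
      · intro he
        rw [← h3] at he
        obtain ⟨j0, he⟩ := Set.mem_iUnion.mp he
        by_cases hj0 : j0 ∈ triv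
        · exact ⟨Sum.inl ⟨j0, hj0⟩, he⟩
        · obtain ⟨a, ha, b, hb, heq⟩ := he
          set x : ↑((U : Set V)) := ⟨a, Finset.mem_coe.mpr ((hsubU j0 hj0).1 ha)⟩
          set y : ↑((U : Set V)) := ⟨b, Finset.mem_coe.mpr ((hsubU j0 hj0).2 hb)⟩
          have he'H : s(x, y) ∈ (G.induce (U : Set V)).edgeSet := by
            rw [SimpleGraph.mem_edgeSet]
            exact induce_adj_iff.mpr ((h1 j0).2.2.2 a ha b hb)
          rw [← hQ3] at he'H
          obtain ⟨a0, he'⟩ := Set.mem_iUnion.mp he'H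
          refine ⟨Sum.inr a0, ?_⟩
          simp only [Sum.elim_inr]
          rw [hPRE a0]
          refine ⟨s(x, y), he', ?_⟩
          rw [heq]
          rfl
  -- final arithmetic
  refine ⟨U, ?_⟩
  have hUcard : U.card = Fintype.card V - W.card := by
    rw [hUdef, Finset.card_sdiff_of_subset (Finset.subset_univ W), Finset.card_univ]
  have hWle : W.card ≤ Fintype.card V := Finset.card_le_univ W
  have hsub : Fintype.card V - U.card = triv.card := by omega
  have htaueq : tau G = triv.card + sInf NH := by omega
  rw [hsub, htau']
  exact_mod_cast htaueq

end RandomBipartiteDecomposition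
end
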